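/- Let q(T) ∈ ℚ[T] be monic of degree d ≥ 1 and let R = ℚ[T]/⟨q(T)⟩. Let F₁,…,F_n ∈ ℚ[x₁,…,x_n], let v₁(T),…,v_n(T) ∈ ℚ[T] each of degree at most d−1, and let λ₁,…,λ_n ∈ ℚ. For each i, write F_i(v₁(T),…,v_n(T)) = m_i(T)q(T) + r_i(T) with deg r_i < d (division with remainder). Assume: (a) λ₁v₁(T) + ⋯ + λ_nv_n(T) = T as polynomials; (b) the derivative q′(T) = dq/dT is invertible in R; (c) the n×n matrix J = (∂F_i/∂x_j evaluated at (v₁(T),…,v_n(T)))_{i,j} is invertible over R; (d) the (n+1)×(n+1) matrix J_Φ over R whose top-left n×n block is J, whose last column has entries −m₁(T),…,−m_n(T) and 0, and whose last row is (λ₁,…,λ_n,0), is invertible over R. Define, with all computations in R: w = v − J⁻¹·(F₁(v),…,F_n(v))ᵀ; Δ = λ₁w₁ + ⋯ + λ_nw_n − T; U = (dv/dT) − J⁻¹·(dr/dT), where dv/dT and dr/dT are the componentwise polynomial derivatives; and Λ = λ₁U₁ + ⋯ + λ_nU_n. Then: (i) Λ is a unit in R; (ii) with V = w − (Δ/Λ)·U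 and Q = q − (Δ/Λ)·q′ (computed in R), the identity [V; Q − T^d] = [v; q − T^d] − J_Φ⁻¹·[F₁(v); …; F_n(v); λ₁v₁ + ⋯ + λ_nv_n − T] holds in R^{n+1}; and (iii) λ₁V₁ + ⋯ + λ_nV_n = T in R. (Proposition 2.7: the global Newton iteration on a rational univariate representation is the Newton iteration for the map Φ.) -/

import Mathlib

open Polynomial

/-- The quotient ring `R = ℚ[T]/⟨q(T)⟩`. -/
abbrev Rq (q : Polynomial ℚ) : Type := Polynomial ℚ ⧸ Ideal.span ({q} : Set (Polynomial ℚ))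

lemma chain_rule {n : ℕ} (v : Fin n → Polynomial ℚ) (p : MvPolynomial (Fin n) ℚ) :
    derivative (MvPolynomial.aeval v p) =
      ∑ j, MvPolynomial.aeval v (MvPolynomial.pderiv j p) * derivative (v j) := by
  induction p using MvPolynomial.induction_on with
  | C a => simp [MvPolynomial.aeval_C]
  | add p q hp hq => simp [map_add, hp, hq, add_mul, Finset.sum_add_distrib]
  | mul_X p i hp =>
      simp only [map_mul, MvPolynomial.aeval_X, derivative_mul, hp,
        MvPolynomial.pderiv_mul, MvPolynomial.pderiv_X, map_add, add_mul,
        Finset.sum_add_distrib, Finset.sum_mul]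
      refine congrArg₂ (· + ·) ?_ ?_
      · exact Finset.sum_congr rfl fun j _ => by ring
      · simp [MvPolynomial.pderiv_X, Pi.single_apply, apply_ite, mul_comm,
          Finset.sum_ite_eq]

/-- Proposition 2.7: the global Newton iteration on a rational univariate
representation is the Newton iteration for the map `Φ`.  With `q` monic of degree
`d ≥ 1`, `R = ℚ[T]/⟨q⟩`, division with remainder `Fᵢ(v(T)) = mᵢ(T)q(T) + rᵢ(T)`,
`Σ λᵢ vᵢ(T) = T`, `q′` invertible in `R`, the Jacobian `J = (∂Fᵢ/∂xⱼ (v(T)))`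
invertible over `R`, and the bordered Jacobian `J_Φ` invertible over `R`, setting
`w = v − J⁻¹ F(v)`, `Δ = Σ λᵢ wᵢ − T`, `U = v′ − J⁻¹ r′`, `Λ = Σ λᵢ Uᵢ`, we have:
(i) `Λ` is a unit in `R`; (ii) with `V = w − (Δ/Λ)U` and `Q = q − (Δ/Λ)q′`, the
vector `(V, Q − T^d)` equals `(v, q − T^d) − J_Φ⁻¹·(F(v), Σ λᵢvᵢ − T)` in `R^(n+1)`;
and (iii) `Σ λᵢ Vᵢ = T` in `R`. -/
theorem global_newton_is_newton_for_Phi (n : ℕ)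
    (q : Polynomial ℚ) (hqmonic : q.Monic) (hd : 1 ≤ q.natDegree)
    (F : Fin n → MvPolynomial (Fin n) ℚ)
    (v : Fin n → Polynomial ℚ) (hvdeg : ∀ i, (v i).degree < q.degree)
    (lam : Fin n → ℚ)
    (mq r : Fin n → Polynomial ℚ)
    (hmr : ∀ i, MvPolynomial.aeval v (F i) = mq i * q + r i)
    (hrdeg : ∀ i, (r i).degree < q.degree)
    (π : Polynomial ℚ →+* Rq q)
    (hπ : π = Ideal.Quotient.mk (Ideal.span ({q} : Set (Polynomial ℚ))))
    -- (a) `λ₁v₁(T) + ⋯ + λ_n v_n(T) = T` as polynomials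
    (ha : ∑ i, Polynomial.C (lam i) * v i = Polynomial.X)
    -- (b) `q′(T)` is invertible modulo `q(T)`
    (hb : IsUnit (π (derivative q)))
    -- (c) the Jacobian matrix `J` of `F` evaluated at `v(T)` is invertible over `R`
    (J : Matrix (Fin n) (Fin n) (Rq q))
    (hJ : J = Matrix.of fun i j => π (MvPolynomial.aeval v (MvPolynomial.pderiv j (F i))))
    (hc : IsUnit J.det)
    -- (d) the bordered Jacobian `J_Φ` is invertible over `R`
    (JΦ : Matrix (Fin n ⊕ Unit) (Fin n ⊕ Unit) (Rq q))
    (hJΦ : JΦ = Matrix.fromBlocks J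
      (Matrix.of fun i _ => -π (mq i))
      (Matrix.of fun _ j => π (Polynomial.C (lam j))) 0)
    (hdJΦ : IsUnit JΦ.det)
    -- the quantities of Definition 2.6, computed in `R`
    (w : Fin n → Rq q)
    (hw : w = fun i => π (v i) -
      (J⁻¹.mulVec fun j => π (MvPolynomial.aeval v (F j))) i)
    (Δ : Rq q) (hΔ : Δ = ∑ i, π (Polynomial.C (lam i)) * w i - π Polynomial.X)
    (U : Fin n → Rq q)
    (hU : U = fun i => π (derivative (v i)) -
      (J⁻¹.mulVec fun j => π (derivative (r j))) i)
    (Λ : Rq q) (hΛ : Λ = ∑ i, π (Polynomial.C (lam i)) * U i)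
    (V : Fin n → Rq q) (hV : V = fun i => w i - Δ * Ring.inverse Λ * U i)
    (Q : Rq q) (hQ : Q = π q - Δ * Ring.inverse Λ * π (derivative q)) :
    -- (i) `Λ` is invertible modulo `q`
    IsUnit Λ ∧
    -- (ii) `(V, Q − T^d) = (v, q − T^d) − J_Φ⁻¹ ⬝ (F(v), Σᵢ λᵢvᵢ − T)` in `R^(n+1)`
    (Sum.elim V (fun _ => Q - π (Polynomial.X ^ q.natDegree)) =
      Sum.elim (fun i => π (v i)) (fun _ => π q - π (Polynomial.X ^ q.natDegree)) -
        JΦ⁻¹.mulVec (Sum.elim (fun i => π (MvPolynomial.aeval v (F i)))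
          (fun _ => ∑ i, π (Polynomial.C (lam i)) * π (v i) - π Polynomial.X))) ∧
    -- (iii) `Σᵢ λᵢVᵢ = T` in `R`
    ∑ i, π (Polynomial.C (lam i)) * V i = π Polynomial.X := by
  classical
  have hq0 : π q = 0 := by
    rw [hπ]
    exact Ideal.Quotient.eq_zero_iff_mem.mpr (Ideal.mem_span_singleton_self q)
  have hJJ : J * J⁻¹ = 1 := Matrix.mul_nonsing_inv J hc
  have hJJ' : J⁻¹ * J = 1 := Matrix.nonsing_inv_mul J hc
  -- the differentiated division identity, mod q
  have hJv : J.mulVec (fun j => π (derivative (v j))) =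
      fun i => π (mq i) * π (derivative q) + π (derivative (r i)) := by
    funext i
    have h1 : J.mulVec (fun j => π (derivative (v j))) i =
        π (∑ j, MvPolynomial.aeval v (MvPolynomial.pderiv j (F i)) * derivative (v j)) := by
      rw [hJ]
      simp [Matrix.mulVec, dotProduct, map_sum, map_mul]
    rw [h1, ← chain_rule, hmr i]
    simp [derivative_mul, map_add, map_mul, hq0]
  have hJU : J.mulVec U = fun i => π (mq i) * π (derivative q) := by
    have hU' : U = (fun j => π (derivative (v j))) -
        J⁻¹.mulVec (fun j => π (derivative (r j))) := by rw [hU]; rfl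
    rw [hU', Matrix.mulVec_sub, hJv, Matrix.mulVec_mulVec, hJJ, Matrix.one_mulVec]
    funext i; simp
  have hUeq : U = J⁻¹.mulVec (fun i => π (mq i) * π (derivative q)) := by
    rw [← hJU, Matrix.mulVec_mulVec, hJJ', Matrix.one_mulVec]
  have hsmul : ∀ (A : Matrix (Fin n) (Fin n) (Rq q)) (c : Rq q) (y : Fin n → Rq q),
      A.mulVec (fun i => c * y i) = fun i => c * A.mulVec y i := by
    intro A c y; funext i
    simp only [Matrix.mulVec, dotProduct, Finset.mul_sum]
    exact Finset.sum_congr rfl fun j _ => by ring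
  obtain ⟨s, hs⟩ : ∃ s : Rq q,
      s = ∑ i, π (Polynomial.C (lam i)) * (J⁻¹.mulVec fun j => π (mq j)) i := ⟨_, rfl⟩
  have hΛs : Λ = π (derivative q) * s := by
    rw [hΛ, hUeq, hs]
    simp only [Matrix.mulVec, dotProduct, Finset.mul_sum]
    exact Finset.sum_congr rfl fun i _ => Finset.sum_congr rfl fun j _ => by ring
  -- Schur complement determinant
  haveI : Invertible J := J.invertibleOfIsUnitDet hc
  have hdet : JΦ.det = J.det * s := by
    rw [hJΦ, Matrix.det_fromBlocks₁₁]
    congr 1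
    rw [Matrix.det_unique, Matrix.invOf_eq_nonsing_inv, hs]
    simp only [Matrix.sub_apply, Matrix.zero_apply, Matrix.mul_apply, Matrix.of_apply,
      Matrix.mulVec, dotProduct, mul_neg, zero_sub, neg_neg,
      Finset.sum_mul, Finset.mul_sum, Finset.sum_neg_distrib, neg_neg]
    conv_lhs => rw [Finset.sum_comm]
    simp only [← Finset.sum_neg_distrib]
    exact Finset.sum_congr rfl fun i _ => Finset.sum_congr rfl fun j _ => by ring
  have hsu : IsUnit s := by
    have h := hdJΦ
    rw [hdet] at h
    exact isUnit_of_mul_isUnit_right h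
  have hΛu : IsUnit Λ := by rw [hΛs]; exact hb.mul hsu
  have hδΛ : Δ * Ring.inverse Λ * Λ = Δ := by
    rw [mul_assoc, Ring.inverse_mul_cancel Λ hΛu, mul_one]
  -- (iii)
  have hiii : ∑ i, π (Polynomial.C (lam i)) * V i = π Polynomial.X := by
    have h1 : ∑ i, π (Polynomial.C (lam i)) * (Δ * Ring.inverse Λ * U i) =
        Δ * Ring.inverse Λ * Λ := by
      rw [hΛ, Finset.mul_sum]
      exact Finset.sum_congr rfl fun i _ => by ring
    have h2 : ∑ i, π (Polynomial.C (lam i)) * w i = Δ + π Polynomial.X := by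
      rw [hΔ]; ring
    rw [hV]
    simp only [mul_sub, Finset.sum_sub_distrib, h1, h2, hδΛ]
    ring
  refine ⟨hΛu, ?_, hiii⟩
  -- (ii)
  set x : Fin n ⊕ Unit → Rq q :=
    Sum.elim (fun i => π (v i) - V i) (fun _ => π q - Q) with hx
  have hx1 : (x ∘ Sum.inl) = (J⁻¹.mulVec fun j => π (MvPolynomial.aeval v (F j))) +
      fun i => Δ * Ring.inverse Λ * U i := by
    funext i
    simp only [hx, Function.comp_apply, Sum.elim_inl, hV, hw, Pi.add_apply]
    ring
  have hx2 : (x ∘ Sum.inr) = fun _ => Δ * Ring.inverse Λ * π (derivative q) := by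
    funext u
    simp only [hx, Function.comp_apply, Sum.elim_inr, hQ]
    ring
  have hmul : JΦ.mulVec x = Sum.elim (fun i => π (MvPolynomial.aeval v (F i)))
      (fun _ => ∑ i, π (Polynomial.C (lam i)) * π (v i) - π Polynomial.X) := by
    rw [hJΦ, Matrix.fromBlocks_mulVec]
    have htop : J.mulVec (x ∘ Sum.inl) +
        (Matrix.of fun i (_ : Unit) => -π (mq i)).mulVec (x ∘ Sum.inr) =
        fun i => π (MvPolynomial.aeval v (F i)) := by
      rw [hx1, hx2, Matrix.mulVec_add, hsmul J (Δ * Ring.inverse Λ) U, hJU,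
        Matrix.mulVec_mulVec, hJJ, Matrix.one_mulVec]
      funext i
      simp only [Pi.add_apply, Matrix.mulVec, dotProduct, Matrix.of_apply,
        Finset.univ_unique, Finset.sum_singleton]
      ring
    have hbot : (Matrix.of fun (_ : Unit) j => π (Polynomial.C (lam j))).mulVec (x ∘ Sum.inl) +
        (0 : Matrix Unit Unit (Rq q)).mulVec (x ∘ Sum.inr) =
        fun _ => ∑ i, π (Polynomial.C (lam i)) * π (v i) - π Polynomial.X := by
      funext u
      simp only [Matrix.zero_mulVec, Pi.add_apply, Pi.zero_apply, add_zero]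
      simp only [Matrix.mulVec, dotProduct, Matrix.of_apply, Function.comp_apply, hx,
        Sum.elim_inl, mul_sub, Finset.sum_sub_distrib, hiii]
    rw [htop, hbot]
  have hinv : JΦ⁻¹.mulVec (Sum.elim (fun i => π (MvPolynomial.aeval v (F i)))
      (fun _ => ∑ i, π (Polynomial.C (lam i)) * π (v i) - π Polynomial.X)) = x := by
    rw [← hmul, Matrix.mulVec_mulVec, Matrix.nonsing_inv_mul JΦ hdJΦ, Matrix.one_mulVec]
  rw [hinv]
  funext i
  cases i with
  | inl i => simp [hx]
  | inr u => simp [hx]
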